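/- Let N ≥ 1, let H : ℝ → ℝ be monotone increasing, and let Y, M ∈ 𝕊(N) with −Y ≤ M. Then Σ_{j=1}^{N} H(λ_j(Y)) ≥ H(λ_N(Y)) + Σ_{j=2}^{N} H(−λ_j(M)). -/

import Mathlib

open Matrix

/-- The Loewner partial order on matrices: `X ≤ Y` iff `Y - X` is positive semidefinite. -/
def Loewner {n : Type*} [Fintype n] (X Y : Matrix n n ℝ) : Prop := (Y - X).PosSemidef

/-- The eigenvalues of a real symmetric matrix, listed in increasing order. -/
noncomputable def eigs {N : ℕ} (X : Matrix (Fin N) (Fin N) ℝ) : Fin N → ℝ :=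
  if h : X.IsHermitian then h.eigenvalues ∘ Tuple.sort h.eigenvalues else 0

/-- The smallest eigenvalue of a real symmetric matrix. -/
noncomputable def lam1 {N : ℕ} (X : Matrix (Fin N) (Fin N) ℝ) : ℝ := ⨅ i, eigs X i

/-- The largest eigenvalue of a real symmetric matrix. -/
noncomputable def lamN {N : ℕ} (X : Matrix (Fin N) (Fin N) ℝ) : ℝ := ⨆ i, eigs X i

open scoped RealInnerProductSpace

namespace SuperAux

variable {N : ℕ}

lemma repr_eq_zero_of_notmem (b : OrthonormalBasis (Fin N) ℝ (EuclideanSpace ℝ (Fin N)))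
    (S : Finset (Fin N)) {v : EuclideanSpace ℝ (Fin N)}
    (hv : v ∈ Submodule.span ℝ (⇑b '' ↑S)) {i : Fin N} (hi : i ∉ S) :
    b.repr v i = 0 := by
  induction hv using Submodule.span_induction with
  | mem x hx =>
    obtain ⟨j, hj, rfl⟩ := hx
    have hij : i ≠ j := fun h => hi (h ▸ hj)
    simp [b.repr_self, EuclideanSpace.single_apply, hij]
  | zero => simp
  | add x y _ _ hx hy => simp [hx, hy]
  | smul a x _ hx => simp [hx]

lemma toEuclideanLin_eigenvectorBasis {A : Matrix (Fin N) (Fin N) ℝ} (hA : A.IsHermitian)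
    (i : Fin N) :
    Matrix.toEuclideanLin A (hA.eigenvectorBasis i)
      = hA.eigenvalues i • hA.eigenvectorBasis i := by
  rw [Matrix.toEuclideanLin_apply]
  ext j
  have := congrFun (hA.mulVec_eigenvectorBasis i) j
  simpa using this

lemma inner_eq_sum_repr (b : OrthonormalBasis (Fin N) ℝ (EuclideanSpace ℝ (Fin N)))
    (v w : EuclideanSpace ℝ (Fin N)) :
    ⟪v, w⟫ = ∑ i, b.repr v i * b.repr w i := by
  rw [← b.sum_inner_mul_inner v w]
  refine Finset.sum_congr rfl fun i _ => ?_
  rw [b.repr_apply_apply, b.repr_apply_apply, real_inner_comm v (b i)]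

lemma inner_toEuclideanLin {A : Matrix (Fin N) (Fin N) ℝ} (hA : A.IsHermitian)
    (v : EuclideanSpace ℝ (Fin N)) :
    ⟪v, Matrix.toEuclideanLin A v⟫
      = ∑ i, hA.eigenvalues i * (hA.eigenvectorBasis.repr v i) ^ 2 := by
  set b := hA.eigenvectorBasis with hb
  have hsym : (Matrix.toEuclideanLin A).IsSymmetric :=
    Matrix.isHermitian_iff_isSymmetric.mp hA
  have hrepr : ∀ i, b.repr (Matrix.toEuclideanLin A v) i = hA.eigenvalues i * b.repr v i := by
    intro i
    rw [b.repr_apply_apply, b.repr_apply_apply, ← hsym (b i) v,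
        toEuclideanLin_eigenvectorBasis hA i, real_inner_smul_left]
  calc ⟪v, Matrix.toEuclideanLin A v⟫
      = ∑ i, (b.repr v i) * (b.repr (Matrix.toEuclideanLin A v) i) :=
        inner_eq_sum_repr b v _
    _ = ∑ i, hA.eigenvalues i * (b.repr v i) ^ 2 := by
        refine Finset.sum_congr rfl fun i _ => ?_
        rw [hrepr i]; ring

lemma inner_self_eq_sum_sq (b : OrthonormalBasis (Fin N) ℝ (EuclideanSpace ℝ (Fin N)))
    (v : EuclideanSpace ℝ (Fin N)) :
    ⟪v, v⟫ = ∑ i, (b.repr v i) ^ 2 := by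
  rw [inner_eq_sum_repr b v v]
  refine Finset.sum_congr rfl fun i _ => ?_
  ring

lemma quad_le {A : Matrix (Fin N) (Fin N) ℝ} (hA : A.IsHermitian)
    (S : Finset (Fin N)) (c : ℝ) (hc : ∀ i ∈ S, hA.eigenvalues i ≤ c)
    {v : EuclideanSpace ℝ (Fin N)}
    (hv : v ∈ Submodule.span ℝ (⇑hA.eigenvectorBasis '' ↑S)) :
    ⟪v, Matrix.toEuclideanLin A v⟫ ≤ c * ⟪v, v⟫ := by
  rw [inner_toEuclideanLin hA v, inner_self_eq_sum_sq hA.eigenvectorBasis v,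
      Finset.mul_sum]
  refine Finset.sum_le_sum fun i _ => ?_
  by_cases hi : i ∈ S
  · exact mul_le_mul_of_nonneg_right (hc i hi) (sq_nonneg _)
  · rw [repr_eq_zero_of_notmem hA.eigenvectorBasis S hv hi]
    simp

lemma span_finrank {A : Matrix (Fin N) (Fin N) ℝ} (hA : A.IsHermitian)
    (S : Finset (Fin N)) :
    Module.finrank ℝ (Submodule.span ℝ (⇑hA.eigenvectorBasis '' ↑S)) = S.card := by
  have hli : LinearIndependent ℝ (⇑hA.eigenvectorBasis ∘ (Subtype.val : {x // x ∈ S} → Fin N)) :=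
    (hA.eigenvectorBasis.orthonormal.linearIndependent).comp _ Subtype.val_injective
  have hrange : Set.range (⇑hA.eigenvectorBasis ∘ (Subtype.val : {x // x ∈ S} → Fin N))
      = ⇑hA.eigenvectorBasis '' ↑S := by
    rw [Set.range_comp]
    ext x
    simp
  rw [← hrange, finrank_span_eq_card hli, Fintype.card_coe]

lemma weyl {A B : Matrix (Fin N) (Fin N) ℝ} (hA : A.IsHermitian) (hB : B.IsHermitian)
    (hAB : (A + B).PosSemidef) (j : Fin N) :
    0 ≤ eigs A j + eigs B j.rev := by
  have hjN : j.val < N := j.isLt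
  set σ := Tuple.sort hA.eigenvalues with hσ
  set τ := Tuple.sort hB.eigenvalues with hτ
  set S₁ := (Finset.Iic j).image σ with hS₁
  set S₂ := (Finset.Iic j.rev).image τ with hS₂
  set U := Submodule.span ℝ (⇑hA.eigenvectorBasis '' ↑S₁) with hU
  set V := Submodule.span ℝ (⇑hB.eigenvectorBasis '' ↑S₂) with hV
  have frU : Module.finrank ℝ U = j.val + 1 := by
    rw [hU, span_finrank, hS₁, Finset.card_image_of_injective _ σ.injective, Fin.card_Iic]
  have frV : Module.finrank ℝ V = N - j.val := by
    rw [hV, span_finrank, hS₂, Finset.card_image_of_injective _ τ.injective, Fin.card_Iic,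
        Fin.val_rev]
    omega
  have hUV : U ⊓ V ≠ ⊥ := by
    intro hbot
    have h1 := Submodule.finrank_sup_add_finrank_inf_eq U V
    have h2 : Module.finrank ℝ ↥(U ⊔ V) ≤ N := by
      have := Submodule.finrank_le (U ⊔ V)
      simpa [finrank_euclideanSpace] using this
    rw [hbot] at h1
    simp only [finrank_bot] at h1
    omega
  obtain ⟨v, hvUV, hv0⟩ := Submodule.exists_mem_ne_zero_of_ne_bot hUV
  have heigsA : eigs A j = hA.eigenvalues (σ j) := by
    simp only [eigs, dif_pos hA, hσ, Function.comp_apply]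
  have heigsB : eigs B j.rev = hB.eigenvalues (τ j.rev) := by
    simp only [eigs, dif_pos hB, hτ, Function.comp_apply]
  have h1 : ⟪v, Matrix.toEuclideanLin A v⟫ ≤ eigs A j * ⟪v, v⟫ := by
    refine quad_le hA S₁ _ ?_ (hvUV.1)
    intro i hi
    rw [hS₁] at hi
    obtain ⟨k, hk, rfl⟩ := Finset.mem_image.mp hi
    rw [heigsA]
    exact Tuple.monotone_sort hA.eigenvalues (Finset.mem_Iic.mp hk)
  have h2 : ⟪v, Matrix.toEuclideanLin B v⟫ ≤ eigs B j.rev * ⟪v, v⟫ := by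
    refine quad_le hB S₂ _ ?_ (hvUV.2)
    intro i hi
    rw [hS₂] at hi
    obtain ⟨k, hk, rfl⟩ := Finset.mem_image.mp hi
    rw [heigsB]
    exact Tuple.monotone_sort hB.eigenvalues (Finset.mem_Iic.mp hk)
  have h0 : 0 ≤ ⟪v, Matrix.toEuclideanLin (A + B) v⟫ := by
    have := hAB.re_dotProduct_nonneg (WithLp.equiv 2 (Fin N → ℝ) v)
    simpa [PiLp.inner_apply, RCLike.inner_apply, Matrix.toEuclideanLin_apply,
      dotProduct, add_mul, Finset.sum_add_distrib, mul_comm,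
      Matrix.add_mulVec, Pi.add_apply] using this
  have hadd : Matrix.toEuclideanLin (A + B) v
      = Matrix.toEuclideanLin A v + Matrix.toEuclideanLin B v := by
    rw [map_add]; rfl
  have hpos : 0 < ⟪v, v⟫ := by
    rcases lt_or_eq_of_le (real_inner_self_nonneg (x := v)) with h | h
    · exact h
    · exact absurd (inner_self_eq_zero.mp h.symm) hv0
  have hsum : 0 ≤ (eigs A j + eigs B j.rev) * ⟪v, v⟫ := by
    rw [hadd, inner_add_right] at h0
    nlinarith
  nlinarith

end SuperAux

theorem sum_H_eigenvalues_super {N : ℕ} (hN : 1 ≤ N) (H : ℝ → ℝ) (hH : Monotone H)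
    (Y M : Matrix (Fin N) (Fin N) ℝ) (hY : Y.IsHermitian) (hM : M.IsHermitian)
    (hYM : Loewner (-Y) M) :
    ∑ j : Fin N, H (eigs Y j) ≥
      H (eigs Y ⟨N - 1, by omega⟩) +
        ∑ j ∈ Finset.univ.erase (⟨0, hN⟩ : Fin N), H (-(eigs M j)) := by
  have hPSD : (M + Y).PosSemidef := by
    have h := hYM
    unfold Loewner at h
    simpa [sub_neg_eq_add] using h
  have key : ∀ j : Fin N, -(eigs M j) ≤ eigs Y j.rev := by
    intro j
    have := SuperAux.weyl hM hY hPSD j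
    linarith
  have hrev0 : (⟨0, hN⟩ : Fin N).rev = ⟨N - 1, by omega⟩ := by
    ext
    simp [Fin.val_rev]
  rw [ge_iff_le]
  have hsplit : ∑ j : Fin N, H (eigs Y j)
      = H (eigs Y ⟨N - 1, by omega⟩)
        + ∑ j ∈ Finset.univ.erase (⟨N - 1, by omega⟩ : Fin N), H (eigs Y j) :=
    (Finset.add_sum_erase _ _ (Finset.mem_univ _)).symm
  rw [hsplit]
  refine add_le_add_right ?_ _
  have step1 : ∑ j ∈ Finset.univ.erase (⟨0, hN⟩ : Fin N), H (-(eigs M j))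
      ≤ ∑ j ∈ Finset.univ.erase (⟨0, hN⟩ : Fin N), H (eigs Y j.rev) :=
    Finset.sum_le_sum fun j _ => hH (key j)
  refine step1.trans (le_of_eq ?_)
  refine Finset.sum_nbij' (fun j => j.rev) (fun k => k.rev) ?_ ?_ ?_ ?_ ?_
  · intro a ha
    rw [Finset.mem_erase] at ha ⊢
    refine ⟨?_, Finset.mem_univ _⟩
    intro hcon
    apply ha.1
    apply Fin.rev_injective
    rw [hrev0]
    exact hcon
  · intro a ha
    rw [Finset.mem_erase] at ha ⊢
    refine ⟨?_, Finset.mem_univ _⟩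
    intro hcon
    apply ha.1
    have : a.rev.rev = (⟨0, hN⟩ : Fin N).rev := congrArg Fin.rev hcon
    rwa [Fin.rev_rev, hrev0] at this
  · intro a _; exact Fin.rev_rev a
  · intro a _; exact Fin.rev_rev a
  · intro a _; rfl
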